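/- An automorphism σ of a d-ary rooted tree T is settled if and only if for μ-almost every x ∈ ∂T the closure of the σ-orbit of x is a clopen subset of ∂T, where μ is the uniform Bernoulli measure on ∂T. -/

import Mathlib

/-- The boundary of the spherically homogeneous rooted tree with spherical
index `m`: infinite paths are sequences `x` with `x n ∈ {0, …, m n - 1}`. -/
abbrev Bd (m : ℕ → ℕ) : Type := ∀ n : ℕ, Fin (m n)

/-- A permutation of the boundary is a tree automorphism iff it preserves the
relation "agree on the first `N` coordinates" (i.e. it permutes each vertex
level preserving the tree structure). -/
def IsTreeAut {m : ℕ → ℕ} (e : Equiv.Perm (Bd m)) : Prop :=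
  ∀ (N : ℕ) (x y : Bd m), (∀ n < N, x n = y n) ↔ (∀ n < N, e x n = e y n)

/-- The automorphism group of the spherically homogeneous rooted tree with
spherical index `m`, realized as a subgroup of the permutations of the
boundary. -/
def treeAutGroup (m : ℕ → ℕ) : Subgroup (Equiv.Perm (Bd m)) where
  carrier := {e | IsTreeAut e}
  one_mem' := fun _ _ _ => Iff.rfl
  mul_mem' := by
    intro a b ha hb N x y
    exact (hb N x y).trans (ha N (b x) (b y))
  inv_mem' := by
    intro a ha N x y
    have h := ha N (a⁻¹ x) (a⁻¹ y)
    simpa using h.symm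

/-- The orbit of `x` under the cyclic group generated by `a`. -/
def orbitZ {m : ℕ → ℕ} (a : Equiv.Perm (Bd m)) (x : Bd m) : Set (Bd m) :=
  {y | ∃ k : ℤ, (a ^ k) x = y}

/-- `a` acts transitively on every vertex level `V n` (vertices at level `n`
are identified with length-`n` prefixes of boundary points). -/
def LevelTransitive {m : ℕ → ℕ} (a : Equiv.Perm (Bd m)) : Prop :=
  ∀ (n : ℕ) (x y : Bd m), ∃ k : ℤ, ∀ i < n, ((a ^ k) x) i = y i

/-- `f` belongs to the closure of the set `Γ` of tree automorphisms in the
profinite (= uniform) topology on `Aut(T)`: for every level `n` there is an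
element of `Γ` agreeing with `f` up to level `n` everywhere. -/
def InClosure {m : ℕ → ℕ} (Γ : Set (Equiv.Perm (Bd m))) (f : Bd m → Bd m) : Prop :=
  ∀ n : ℕ, ∃ g ∈ Γ, ∀ x : Bd m, ∀ i < n, f x i = g x i

variable {d : ℕ}

/-- The vertex `v` (identified with any boundary point passing through it)
lies in a cycle of length `k` of the restriction of `σ` to the level-`n`
vertices of the `d`-ary tree. -/
def InCycle (σ : Equiv.Perm (Bd (fun _ => d))) (n k : ℕ) (v : Bd (fun _ => d)) : Prop :=
  0 < k ∧ (∀ i < n, ((σ ^ k) v) i = v i) ∧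
    ∀ j, 0 < j → j < k → ¬ (∀ i < n, ((σ ^ j) v) i = v i)

/-- `x` passes through a level-`n` vertex lying above the cycle of the
level-`n` vertex of `v`. -/
def AboveCycle (σ : Equiv.Perm (Bd (fun _ => d))) (n : ℕ) (v x : Bd (fun _ => d)) : Prop :=
  ∃ j : ℕ, ∀ i < n, x i = ((σ ^ j) v) i

/-- The vertex of `v` at level `n` lies in a *stable* cycle of length `k` of
`σ`: it lies in a cycle of length `k`, and for every level `m > n` all the
vertices of level `m` lying above this cycle are in one single cycle of the
restriction of `σ` to level `m` (necessarily of length `d^(m-n) * k`). -/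
def InStableCycle (σ : Equiv.Perm (Bd (fun _ => d))) (n k : ℕ) (v : Bd (fun _ => d)) : Prop :=
  InCycle σ n k v ∧
    ∀ mlev, n < mlev → ∀ x y : Bd (fun _ => d), AboveCycle σ n v x → AboveCycle σ n v y →
      ∃ t : ℕ, ∀ i < mlev, ((σ ^ t) x) i = y i

/-- A level-`n` vertex `w` of the `d`-ary tree is in a stable cycle of `σ`. -/
def StableVertex (σ : Equiv.Perm (Bd (fun _ => d))) (n : ℕ) (w : Fin n → Fin d) : Prop :=
  ∃ v : Bd (fun _ => d), (∀ i : Fin n, v (i : ℕ) = w i) ∧ ∃ k : ℕ, InStableCycle σ n k v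

/-- `σ` is settled: the proportion of level-`n` vertices lying in stable
cycles of `σ` tends to `1` as `n → ∞`. -/
def SettledAut (σ : Equiv.Perm (Bd (fun _ => d))) : Prop :=
  Filter.Tendsto
    (fun n : ℕ => (Nat.card {w : Fin n → Fin d // StableVertex σ n w} : ℝ) /
      (Fintype.card (Fin n → Fin d) : ℝ))
    Filter.atTop (nhds 1)

/-- `σ` is strongly settled: from some level `n ≥ 1` on, every vertex lies in
a stable cycle of `σ`. -/
def StronglySettledAut (σ : Equiv.Perm (Bd (fun _ => d))) : Prop :=
  ∃ n : ℕ, 0 < n ∧ ∀ w : Fin n → Fin d, StableVertex σ n w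

/-- A minimal component of the dynamical system `(∂T, σ)`: a nonempty closed
`σ`-invariant set on which every `σ`-orbit is dense. -/
def IsMinimalComponent (σ : Equiv.Perm (Bd (fun _ => d))) (X : Set (Bd (fun _ => d))) : Prop :=
  X.Nonempty ∧ IsClosed X ∧ ⇑σ '' X = X ∧ ∀ x ∈ X, closure (orbitZ σ x) = X

section Infra

variable {d : ℕ}

local notation "B" => Bd (fun _ => d)

lemma isTreeAut_zpow {σ : Equiv.Perm B} (hσ : σ ∈ treeAutGroup (fun _ => d)) (t : ℤ) :
    IsTreeAut (σ ^ t) := (treeAutGroup (fun _ => d)).zpow_mem hσ t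

lemma isTreeAut_pow {σ : Equiv.Perm B} (hσ : σ ∈ treeAutGroup (fun _ => d)) (t : ℕ) :
    IsTreeAut (σ ^ t) := (treeAutGroup (fun _ => d)).pow_mem hσ t

lemma agree_map {a : Equiv.Perm B} (ha : IsTreeAut a) {n : ℕ} {x y : B}
    (h : ∀ i < n, x i = y i) : ∀ i < n, a x i = a y i := (ha n x y).mp h

/-- The extension of a finite prefix to a boundary point (needs `0 < d`). -/
def extw (hd : 0 < d) {n : ℕ} (w : Fin n → Fin d) : B :=
  fun i => if h : i < n then w ⟨i, h⟩ else ⟨0, hd⟩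

lemma extw_agree (hd : 0 < d) {n : ℕ} (w : Fin n → Fin d) :
    ∀ i < n, extw hd w i = (fun i : ℕ => if h : i < n then w ⟨i, h⟩ else (⟨0, hd⟩ : Fin d)) i :=
  fun _ _ => rfl

/-- Level-`n` period of a tree automorphism: some positive power acts
trivially on level `n`. -/
lemma exists_period (hd : 0 < d) {σ : Equiv.Perm B} (hσ : σ ∈ treeAutGroup (fun _ => d))
    (n : ℕ) : ∃ N : ℕ, 0 < N ∧ ∀ x : B, ∀ i < n, ((σ ^ N) x) i = x i := by
  classical
  set f : (Fin n → Fin d) → (Fin n → Fin d) :=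
    fun w => fun i => σ (extw hd w) i with hf
  have key : ∀ x : B, ∀ i : Fin n, σ x (i : ℕ) = f (fun j : Fin n => x (j : ℕ)) i := by
    intro x i
    have hagree : ∀ j < n, x j = extw hd (fun j : Fin n => x (j : ℕ)) j := by
      intro j hj; simp [extw, hj]
    exact agree_map hσ hagree (i : ℕ) i.2
  have finj : Function.Injective f := by
    intro w1 w2 h12
    have h : ∀ i < n, σ (extw hd w1) i = σ (extw hd w2) i := by
      intro i hi
      have := congrFun h12 ⟨i, hi⟩
      simpa [hf] using this
    have h2 := (hσ n (extw hd w1) (extw hd w2)).mpr h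
    funext i
    have := h2 (i : ℕ) i.2
    simpa [extw] using this
  have fbij : Function.Bijective f := Finite.injective_iff_bijective.mp finj
  set e : Equiv.Perm (Fin n → Fin d) := Equiv.ofBijective f fbij with he
  have iter : ∀ (k : ℕ) (x : B) (i : Fin n),
      (σ ^ k) x (i : ℕ) = (e ^ k) (fun j : Fin n => x (j : ℕ)) i := by
    intro k
    induction k with
    | zero => intro x i; simp
    | succ k ih =>
      intro x i
      have h1 : (σ ^ (k+1)) x = (σ ^ k) (σ x) := by
        rw [pow_succ]; rfl
      rw [h1, ih (σ x) i]
      have : (fun j : Fin n => σ x (j : ℕ)) = e (fun j : Fin n => x (j : ℕ)) := by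
        funext j; exact key x j
      rw [this]
      have : (e ^ (k+1)) (fun j : Fin n => x (j : ℕ))
          = (e ^ k) (e (fun j : Fin n => x (j : ℕ))) := by
        rw [pow_succ]; rfl
      rw [this]
  refine ⟨orderOf e, orderOf_pos e, ?_⟩
  intro x i hi
  have := iter (orderOf e) x ⟨i, hi⟩
  rw [this, pow_orderOf_eq_one]
  rfl

/-- Any integer power agrees on level `n` with some natural power. -/
lemma zpow_eq_pow_level (hd : 0 < d) {σ : Equiv.Perm B} (hσ : σ ∈ treeAutGroup (fun _ => d))
    (n : ℕ) (t : ℤ) : ∃ j : ℕ, ∀ x : B, ∀ i < n, ((σ ^ t) x) i = ((σ ^ j) x) i := by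
  obtain ⟨N, hN, hper⟩ := exists_period hd hσ n
  have hNper : ∀ q : ℤ, ∀ x : B, ∀ i < n, (((σ ^ N : Equiv.Perm B) ^ q) x) i = x i := by
    intro q
    induction q using Int.induction_on with
    | zero => intro x i hi; simp
    | succ q ih =>
      intro x i hi
      have h1 : ((σ ^ N : Equiv.Perm B) ^ ((q : ℤ) + 1)) x
          = ((σ ^ N : Equiv.Perm B) ^ (q : ℤ)) ((σ ^ N) x) := by
        rw [zpow_add_one]; rfl
      rw [h1, ih ((σ ^ N) x) i hi]
      exact hper x i hi
    | pred q ih =>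
      intro x i hi
      have h1 : ((σ ^ N : Equiv.Perm B) ^ (-(q : ℤ) - 1)) x
          = ((σ ^ N : Equiv.Perm B) ^ (-(q : ℤ))) ((σ ^ N)⁻¹ x) := by
        rw [zpow_sub_one]; rfl
      rw [h1, ih ((σ ^ N)⁻¹ x) i hi]
      have := hper ((σ ^ N)⁻¹ x) i hi
      rw [← Equiv.Perm.mul_apply, mul_inv_cancel, Equiv.Perm.one_apply] at this
      exact this.symm
  refine ⟨(t % (N : ℤ)).toNat, ?_⟩
  intro x i hi
  have hNz : (N : ℤ) ≠ 0 := by exact_mod_cast hN.ne'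
  have hmod : t = (N : ℤ) * (t / (N : ℤ)) + t % (N : ℤ) := (Int.mul_ediv_add_emod t N).symm
  have hr : (0 : ℤ) ≤ t % (N : ℤ) := Int.emod_nonneg t hNz
  have hj : (σ ^ (t % (N : ℤ))) = σ ^ ((t % (N : ℤ)).toNat) := by
    rw [← zpow_natCast σ ((t % (N : ℤ)).toNat)]
    congr 1
    omega
  have hsplit : (σ ^ t) x = ((σ ^ N : Equiv.Perm B) ^ (t / (N : ℤ))) ((σ ^ ((t % (N : ℤ)).toNat)) x) := by
    conv_lhs => rw [hmod]
    rw [zpow_add, zpow_mul, zpow_natCast, ← hj]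
    rfl
  rw [hsplit, hNper _ _ i hi]

end Infra

section Topo

variable {d : ℕ}

local notation "B" => Bd (fun _ => d)

lemma isClopen_cyl (n : ℕ) (v : B) : IsClopen {x : B | ∀ i < n, x i = v i} := by
  have : {x : B | ∀ i < n, x i = v i}
      = ⋂ i ∈ Finset.range n, (fun x : B => x i) ⁻¹' {v i} := by
    ext x; simp [Set.mem_iInter]
  rw [this]
  exact isClopen_biInter_finset fun i _ =>
    (isClopen_discrete {v i}).preimage (continuous_apply i)

lemma exists_cyl_subset {U : Set (Bd (fun _ => d))} (hU : IsOpen U) {y : B} (hy : y ∈ U) :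
    ∃ m : ℕ, {z : B | ∀ i < m, z i = y i} ⊆ U := by
  have hmem : U ∈ nhds y := hU.mem_nhds hy
  rw [nhds_pi] at hmem
  rw [Filter.mem_pi] at hmem
  obtain ⟨I, hI, t, ht, hsub⟩ := hmem
  classical
  refine ⟨hI.toFinset.sup id + 1, ?_⟩
  intro z hz
  apply hsub
  intro i hi
  have hiI : i ∈ hI.toFinset := hI.mem_toFinset.mpr hi
  have hilt : i < hI.toFinset.sup id + 1 :=
    Nat.lt_succ_of_le (Finset.le_sup (f := id) hiI)
  rw [hz i hilt]
  have := ht i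
  rw [nhds_discrete, Filter.mem_pure] at this
  exact this

lemma mem_closure_cyl {S : Set (Bd (fun _ => d))} {y : B} :
    y ∈ closure S ↔ ∀ m : ℕ, ∃ z ∈ S, ∀ i < m, z i = y i := by
  constructor
  · intro h m
    have hopen := isClopen_cyl (d := d) m y
    have hmem : y ∈ {x : B | ∀ i < m, x i = y i} := fun i _ => rfl
    obtain ⟨z, hz1, hz2⟩ := mem_closure_iff.mp h _ hopen.isOpen hmem
    exact ⟨z, hz2, hz1⟩
  · intro h
    rw [mem_closure_iff]
    intro U hU hy
    obtain ⟨m, hm⟩ := exists_cyl_subset hU hy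
    obtain ⟨z, hz, hzy⟩ := h m
    exact ⟨z, hm hzy, hz⟩

end Topo

section Dyn

variable {d : ℕ}

local notation "B" => Bd (fun _ => d)

lemma exists_inCycle (hd : 0 < d) {σ : Equiv.Perm B} (hσ : σ ∈ treeAutGroup (fun _ => d))
    (n : ℕ) (x : B) : ∃ k : ℕ, InCycle σ n k x := by
  classical
  obtain ⟨N, hN, hper⟩ := exists_period hd hσ n
  have hex : ∃ j : ℕ, 0 < j ∧ ∀ i < n, ((σ ^ j) x) i = x i := ⟨N, hN, hper x⟩
  refine ⟨Nat.find hex, (Nat.find_spec hex).1, (Nat.find_spec hex).2, ?_⟩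
  intro j hj1 hj2 hcon
  exact Nat.find_min hex hj2 ⟨hj1, hcon⟩

lemma stable_clopen (hd : 0 < d) {σ : Equiv.Perm B} (hσ : σ ∈ treeAutGroup (fun _ => d))
    {x : B} {n : ℕ} (hx : StableVertex σ n (fun i : Fin n => x (i : ℕ))) :
    IsClopen (closure (orbitZ σ x)) := by
  obtain ⟨v, hv, k, hcyc, hstab⟩ := hx
  have hvx : ∀ i < n, v i = x i := fun i hi => hv ⟨i, hi⟩
  obtain ⟨N, hN, hper⟩ := exists_period hd hσ n
  have hperNat : ∀ q : ℕ, ∀ y : B, ∀ i < n, ((σ ^ (N * q)) y) i = y i := by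
    intro q
    induction q with
    | zero => intro y i hi; simp
    | succ q ih =>
      intro y i hi
      have h1 : (σ ^ (N * (q + 1))) y = (σ ^ (N * q)) ((σ ^ N) y) := by
        rw [Nat.mul_succ, pow_add]; rfl
      rw [h1, ih ((σ ^ N) y) i hi]
      exact hper y i hi
  set A := {y : B | AboveCycle σ n v y} with hA
  have hmodA : ∀ j : ℕ, ∀ i < n, ((σ ^ j) v) i = ((σ ^ (j % N)) v) i := by
    intro j i hi
    conv_lhs => rw [← Nat.div_add_mod j N]
    have h1 : (σ ^ (N * (j / N) + j % N)) v = (σ ^ (N * (j / N))) ((σ ^ (j % N)) v) := by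
      rw [pow_add]; rfl
    rw [h1]
    exact hperNat (j / N) ((σ ^ (j % N)) v) i hi
  have hAeq : A = ⋃ j ∈ Finset.range N, {y : B | ∀ i < n, y i = ((σ ^ j) v) i} := by
    ext y
    simp only [hA, Set.mem_setOf_eq, AboveCycle, Set.mem_iUnion, Finset.mem_range,
      exists_prop]
    constructor
    · rintro ⟨j, hj⟩
      exact ⟨j % N, Nat.mod_lt _ hN, fun i hi => by rw [hj i hi, hmodA j i hi]⟩
    · rintro ⟨j, _, hj⟩
      exact ⟨j, hj⟩
  have hAclopen : IsClopen A := by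
    rw [hAeq]
    exact isClopen_biUnion_finset fun j _ => isClopen_cyl n ((σ ^ j) v)
  have horb : orbitZ σ x ⊆ A := by
    rintro y ⟨t, rfl⟩
    obtain ⟨j, hj⟩ := zpow_eq_pow_level hd hσ n t
    refine ⟨j, fun i hi => ?_⟩
    rw [hj x i hi]
    exact agree_map (isTreeAut_pow hσ j) (fun i hi => (hvx i hi).symm) i hi
  have hxA : AboveCycle σ n v x := ⟨0, fun i hi => by simpa using (hvx i hi).symm⟩
  have hAsub : A ⊆ closure (orbitZ σ x) := by
    intro y hy
    rw [mem_closure_cyl]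
    intro m
    have hm' : n < max m (n + 1) := lt_of_lt_of_le (Nat.lt_succ_self n) (le_max_right _ _)
    obtain ⟨t, ht⟩ := hstab (max m (n + 1)) hm' x y hxA hy
    refine ⟨(σ ^ t) x, ⟨(t : ℤ), by rw [zpow_natCast]⟩, fun i hi => ?_⟩
    exact ht i (lt_of_lt_of_le hi (le_max_left _ _))
  have : closure (orbitZ σ x) = A :=
    subset_antisymm (closure_minimal horb hAclopen.isClosed) hAsub
  rw [this]
  exact hAclopen

lemma clopen_stable (hd : 0 < d) {σ : Equiv.Perm B} (hσ : σ ∈ treeAutGroup (fun _ => d))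
    {x : B} (h : IsClopen (closure (orbitZ σ x))) :
    ∃ n : ℕ, StableVertex σ n (fun i : Fin n => x (i : ℕ)) := by
  classical
  set C := closure (orbitZ σ x) with hC
  have horbC : ∀ j : ℕ, (σ ^ j) x ∈ C := fun j =>
    subset_closure ⟨(j : ℤ), by rw [zpow_natCast]⟩
  have hxC : x ∈ C := by simpa using horbC 0
  have hCcpt : IsCompact C := h.isClosed.isCompact
  have hm : ∀ y : C, ∃ m : ℕ, {z : B | ∀ i < m, z i = (y : B) i} ⊆ C := fun y =>
    exists_cyl_subset h.isOpen y.2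
  choose mf hmf using hm
  obtain ⟨F, hFc⟩ := hCcpt.elim_nhds_subcover'
    (fun y hy => {z : B | ∀ i < mf ⟨y, hy⟩, z i = y i})
    (fun y hy => (isClopen_cyl _ y).isOpen.mem_nhds (fun i _ => rfl))
  set n := F.sup mf with hn
  have hsat : ∀ y ∈ C, ∀ z : B, (∀ i < n, z i = y i) → z ∈ C := by
    intro y hy z hz
    have := hFc hy
    simp only [Set.mem_iUnion] at this
    obtain ⟨y', hy', hyU⟩ := this
    apply hmf y'
    intro i hi
    have hi' : i < n := lt_of_lt_of_le hi (Finset.le_sup hy')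
    rw [hz i hi']
    exact hyU i hi
  obtain ⟨k, hcyc⟩ := exists_inCycle hd hσ n x
  refine ⟨n, x, fun i => rfl, k, hcyc, ?_⟩
  intro m hm' y z hy hz
  have hyC : y ∈ C := by
    obtain ⟨j, hj⟩ := hy
    exact hsat _ (horbC j) y hj
  have hzC : z ∈ C := by
    obtain ⟨j, hj⟩ := hz
    exact hsat _ (horbC j) z hj
  obtain ⟨y0, hy0orb, hy0⟩ := mem_closure_cyl.mp hyC m
  obtain ⟨z0, hz0orb, hz0⟩ := mem_closure_cyl.mp hzC m
  obtain ⟨t0, rfl⟩ := hy0orb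
  obtain ⟨t1, rfl⟩ := hz0orb
  have h1 : ∀ i < m, ((σ ^ (t1 - t0)) y) i = z i := by
    intro i hi
    have ha := agree_map (isTreeAut_zpow hσ (t1 - t0)) (n := m) hy0
    have hcomp : (σ ^ (t1 - t0)) ((σ ^ t0) x) = (σ ^ t1) x := by
      rw [← Equiv.Perm.mul_apply, ← zpow_add]
      norm_num
    have h2 := ha i hi
    rw [hcomp] at h2
    rw [← h2]
    exact hz0 i hi
  obtain ⟨j, hj⟩ := zpow_eq_pow_level hd hσ m (t1 - t0)
  exact ⟨j, fun i hi => by rw [← hj y i hi]; exact h1 i hi⟩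

lemma stable_mono (hd : 0 < d) {σ : Equiv.Perm B} (hσ : σ ∈ treeAutGroup (fun _ => d))
    {x : B} {n : ℕ} (hx : StableVertex σ n (fun i : Fin n => x (i : ℕ))) :
    StableVertex σ (n + 1) (fun i : Fin (n + 1) => x (i : ℕ)) := by
  obtain ⟨v, hv, k, hcyc, hstab⟩ := hx
  have hvx : ∀ i < n, v i = x i := fun i hi => hv ⟨i, hi⟩
  obtain ⟨k', hcyc'⟩ := exists_inCycle hd hσ (n + 1) x
  refine ⟨x, fun i => rfl, k', hcyc', ?_⟩
  intro m hm y z hy hz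
  have conv : ∀ w : B, AboveCycle σ (n + 1) x w → AboveCycle σ n v w := by
    rintro w ⟨j, hj⟩
    refine ⟨j, fun i hi => ?_⟩
    rw [hj i (Nat.lt_succ_of_lt hi)]
    exact agree_map (isTreeAut_pow hσ j) (fun i hi => (hvx i hi).symm) i hi
  exact hstab m (by omega) y z (conv y hy) (conv z hz)

end Dyn

section Meas

open MeasureTheory

variable {d : ℕ}

local notation "B" => Bd (fun _ => d)

lemma cyl_measurable {n : ℕ} (w : Fin n → Fin d) :
    MeasurableSet {x : B | ∀ i : Fin n, x (i : ℕ) = w i} := by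
  have : {x : B | ∀ i : Fin n, x (i : ℕ) = w i}
      = ⋂ i : Fin n, (fun x : B => x (i : ℕ)) ⁻¹' {w i} := by
    ext x; simp [Set.mem_iInter]
  rw [this]
  exact MeasurableSet.iInter fun i => (measurable_pi_apply _) (measurableSet_singleton _)

lemma cyl_measure (hd : 0 < d) (μ : Measure B)
    (hμ : ∀ (n : ℕ) (v : B), μ {x : B | ∀ i < n, x i = v i} = (1 / (d : ENNReal)) ^ n)
    {n : ℕ} (w : Fin n → Fin d) :
    μ {x : B | ∀ i : Fin n, x (i : ℕ) = w i} = (1 / (d : ENNReal)) ^ n := by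
  have heq : {x : B | ∀ i : Fin n, x (i : ℕ) = w i}
      = {x : B | ∀ i < n, x i = extw hd w i} := by
    ext x
    constructor
    · intro hx i hi
      rw [show extw hd w i = w ⟨i, hi⟩ by simp [extw, hi]]
      exact hx ⟨i, hi⟩
    · intro hx i
      rw [hx (i : ℕ) i.2]
      simp [extw, i.2]
  rw [heq, hμ n (extw hd w)]

lemma Sset_measure (hd : 0 < d) (σ : Equiv.Perm B) (μ : Measure B)
    (hμ : ∀ (n : ℕ) (v : B), μ {x : B | ∀ i < n, x i = v i} = (1 / (d : ENNReal)) ^ n)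
    (n : ℕ) :
    μ {x : B | StableVertex σ n (fun i : Fin n => x (i : ℕ))}
      = (Nat.card {w : Fin n → Fin d // StableVertex σ n w} : ENNReal)
          * (1 / (d : ENNReal)) ^ n := by
  classical
  have heq : {x : B | StableVertex σ n (fun i : Fin n => x (i : ℕ))}
      = ⋃ w : {w : Fin n → Fin d // StableVertex σ n w},
          {x : B | ∀ i : Fin n, x (i : ℕ) = w.1 i} := by
    ext x
    simp only [Set.mem_setOf_eq, Set.mem_iUnion]
    constructor
    · intro hx
      exact ⟨⟨fun i => x (i : ℕ), hx⟩, fun i => rfl⟩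
    · rintro ⟨⟨w, hw⟩, hxw⟩
      have : (fun i : Fin n => x (i : ℕ)) = w := funext hxw
      rw [this]
      exact hw
  have hdisj : Pairwise (Function.onFun Disjoint
      (fun w : {w : Fin n → Fin d // StableVertex σ n w} =>
        {x : B | ∀ i : Fin n, x (i : ℕ) = w.1 i})) := by
    intro w w' hww'
    simp only [Function.onFun, Set.disjoint_left]
    intro x hx hx'
    apply hww'
    apply Subtype.ext
    funext i
    rw [← hx i, ← hx' i]
  rw [heq, measure_iUnion hdisj (fun w => cyl_measurable w.1)]
  rw [tsum_fintype]
  rw [Finset.sum_congr rfl (fun w _ => cyl_measure hd μ hμ w.1)]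
  rw [Finset.sum_const, Finset.card_univ, nsmul_eq_mul, Nat.card_eq_fintype_card]

lemma measure_univ_one (hd : 0 < d) (μ : Measure B)
    (hμ : ∀ (n : ℕ) (v : B), μ {x : B | ∀ i < n, x i = v i} = (1 / (d : ENNReal)) ^ n) :
    μ Set.univ = 1 := by
  have := hμ 0 (fun _ => ⟨0, hd⟩)
  simpa using this

end Meas

lemma ofReal_ratio (c : ℕ) {d : ℕ} (hd : 0 < d) (n : ℕ) :
    (c : ENNReal) * (1 / (d : ENNReal)) ^ n = ENNReal.ofReal ((c : ℝ) / (d : ℝ) ^ n) := by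
  have hpos : (0 : ℝ) < (d : ℝ) ^ n := pow_pos (by exact_mod_cast hd) n
  rw [ENNReal.ofReal_div_of_pos hpos, ENNReal.ofReal_natCast,
    ENNReal.ofReal_pow (by positivity), ENNReal.ofReal_natCast, one_div,
    div_eq_mul_inv, ENNReal.inv_pow]

lemma Sset_measurable {d : ℕ} (σ : Equiv.Perm (Bd (fun _ => d))) (n : ℕ) :
    MeasurableSet {x : Bd (fun _ => d) | StableVertex σ n (fun i : Fin n => x (i : ℕ))} := by
  classical
  have heq : {x : Bd (fun _ => d) | StableVertex σ n (fun i : Fin n => x (i : ℕ))}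
      = ⋃ w : {w : Fin n → Fin d // StableVertex σ n w},
          {x : Bd (fun _ => d) | ∀ i : Fin n, x (i : ℕ) = w.1 i} := by
    ext x
    simp only [Set.mem_setOf_eq, Set.mem_iUnion]
    constructor
    · intro hx
      exact ⟨⟨fun i => x (i : ℕ), hx⟩, fun i => rfl⟩
    · rintro ⟨⟨w, hw⟩, hxw⟩
      have : (fun i : Fin n => x (i : ℕ)) = w := funext hxw
      rw [this]
      exact hw
  rw [heq]
  exact MeasurableSet.iUnion fun w => cyl_measurable w.1


/-- An automorphism `σ` of the `d`-ary rooted tree is settled if and only if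
for `μ`-almost every boundary point `x` the closure of the `σ`-orbit of `x`
is clopen, where `μ` is the uniform Bernoulli measure on the boundary (each
level-`n` cylinder has measure `d⁻ⁿ`). -/
theorem settled_stmt14 (d : ℕ) (hd : 2 ≤ d)
    (σ : Equiv.Perm (Bd (fun _ => d))) (hσ : σ ∈ treeAutGroup (fun _ => d))
    (μ : MeasureTheory.Measure (Bd (fun _ => d)))
    (hμ : ∀ (n : ℕ) (v : Bd (fun _ => d)),
      μ {x : Bd (fun _ => d) | ∀ i < n, x i = v i} = (1 / (d : ENNReal)) ^ n) :
    SettledAut σ ↔ ∀ᵐ x ∂μ, IsClopen (closure (orbitZ σ x)) := by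
  classical
  have hd0 : 0 < d := by omega
  set pn : ℕ → ℝ := fun n =>
    (Nat.card {w : Fin n → Fin d // StableVertex σ n w} : ℝ) /
      (Fintype.card (Fin n → Fin d) : ℝ) with hpn
  set Sset : ℕ → Set (Bd (fun _ => d)) :=
    fun n => {x | StableVertex σ n (fun i : Fin n => x (i : ℕ))} with hSset
  have hSmeas : ∀ n, MeasurableSet (Sset n) := fun n => Sset_measurable σ n
  have huniv : μ Set.univ = 1 := measure_univ_one hd0 μ hμ
  have hofReal : ∀ n, μ (Sset n) = ENNReal.ofReal (pn n) := by
    intro n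
    rw [hSset]
    rw [Sset_measure hd0 σ μ hμ n, ofReal_ratio _ hd0 n, hpn]
    congr 2
    simp [Fintype.card_fun]
  have hEmeas : MeasurableSet (⋃ m, Sset m) := MeasurableSet.iUnion hSmeas
  have hEle : μ (⋃ m, Sset m) ≤ 1 := le_trans (MeasureTheory.measure_mono (Set.subset_univ _)) huniv.le
  rw [show SettledAut σ = Filter.Tendsto pn Filter.atTop (nhds 1) from rfl]
  constructor
  · intro hset
    have hlim : Filter.Tendsto (fun n => ENNReal.ofReal (pn n)) Filter.atTop (nhds 1) := by
      have := (ENNReal.continuous_ofReal.tendsto 1).comp hset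
      simpa [Function.comp_def] using this
    have h1 : ∀ n, ENNReal.ofReal (pn n) ≤ μ (⋃ m, Sset m) := fun n => by
      rw [← hofReal n]; exact MeasureTheory.measure_mono (Set.subset_iUnion _ n)
    have hge : (1 : ENNReal) ≤ μ (⋃ m, Sset m) := le_of_tendsto' hlim h1
    have hEone : μ (⋃ m, Sset m) = 1 := le_antisymm hEle hge
    have hcompl : μ ((⋃ m, Sset m)ᶜ) = 0 := by
      rw [MeasureTheory.measure_compl hEmeas (by rw [hEone]; exact ENNReal.one_ne_top),
        huniv, hEone, tsub_self]
    rw [MeasureTheory.ae_iff]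
    refine MeasureTheory.measure_mono_null ?_ hcompl
    intro x hx
    simp only [Set.mem_setOf_eq] at hx
    simp only [Set.mem_compl_iff, Set.mem_iUnion, not_exists]
    intro n hn
    exact hx (stable_clopen hd0 hσ hn)
  · intro hae
    have hnull : μ ((⋃ m, Sset m)ᶜ) = 0 := by
      refine MeasureTheory.measure_mono_null ?_ (MeasureTheory.ae_iff.mp hae)
      intro x hx
      simp only [Set.mem_compl_iff, Set.mem_iUnion, not_exists] at hx
      simp only [Set.mem_setOf_eq]
      intro hP
      obtain ⟨n, hn⟩ := clopen_stable hd0 hσ hP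
      exact hx n hn
    have hEone : μ (⋃ m, Sset m) = 1 := by
      have h := MeasureTheory.measure_add_measure_compl (μ := μ) hEmeas
      rw [hnull, add_zero, huniv] at h
      exact h
    have hmono : Monotone Sset :=
      monotone_nat_of_le_succ (fun n x hx => stable_mono hd0 hσ hx)
    have hsup : ⨆ n, μ (Sset n) = 1 := by
      rw [← hmono.directed_le.measure_iUnion, hEone]
    have htendE : Filter.Tendsto (fun n => μ (Sset n)) Filter.atTop (nhds 1) := by
      rw [← hsup]
      exact tendsto_atTop_iSup (fun a b hab => MeasureTheory.measure_mono (hmono hab))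
    have htendO : Filter.Tendsto (fun n => ENNReal.ofReal (pn n)) Filter.atTop (nhds 1) := by
      have : (fun n => ENNReal.ofReal (pn n)) = fun n => μ (Sset n) := by
        funext n; rw [hofReal n]
      rw [this]
      exact htendE
    have htoReal := (ENNReal.tendsto_toReal ENNReal.one_ne_top).comp htendO
    have hpn_nonneg : ∀ n, 0 ≤ pn n := fun n => by
      rw [hpn]; positivity
    have : (fun n => (ENNReal.ofReal (pn n)).toReal) = pn := by
      funext n; exact ENNReal.toReal_ofReal (hpn_nonneg n)
    rw [Function.comp_def, this] at htoReal
    simpa using htoReal
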